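/- Let G be a connected locally finite graph whose isoperimetric profile satisfies Φ(k) ≥ c·k/(log k)^{1/α} for all k ≥ 2, for some constant c > 0 and some 0 < α ≤ 1. Fix any β with 0 < β < α/(α+1), and let f : ℕ → ℕ satisfy f(n) = o(e^{n^β}). Then G does not satisfy the {f(n)}-containment property; moreover there exists C > 0 such that no initial fire of size at least C can be contained by deploying at most f(n) firefighters at time n. -/

import Mathlib

open Filter Real

/-- The outer vertex boundary of a set of vertices: vertices outside `K`
adjacent to some vertex of `K`. -/
def SimpleGraph.outerBoundary {V : Type*} (G : SimpleGraph V) (K : Set V) : Set V :=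
  {v | v ∉ K ∧ ∃ u ∈ K, G.Adj u v}

/-- The (vertex) isoperimetric profile of a graph:
`Φ(k) = inf {|∂K| : K ⊆ V, |K| = k}`. -/
noncomputable def SimpleGraph.isoProfile {V : Type*} (G : SimpleGraph V) (k : ℕ) : ℕ :=
  sInf {m | ∃ K : Set V, K.Finite ∧ K.ncard = k ∧ (G.outerBoundary K).ncard = m}

/-- A valid play of the firefighter game on `G` against at most `f n` firefighters
deployed at step `n`. `K n` is the set of burning vertices at time `n`, and `P n`
is the cumulative set of protected vertices at time `n`: at each step at most
`f (n+1)` new vertices, none of them on fire, become protected, and then the fire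
spreads to all unprotected neighbours of burning vertices. -/
structure FireStrategy {V : Type*} (G : SimpleGraph V) (f : ℕ → ℕ) (K P : ℕ → Set V) : Prop where
  burning_finite : ∀ n, (K n).Finite
  protected_finite : ∀ n, (P n).Finite
  protected_zero : P 0 = ∅
  protected_mono : ∀ n, P n ⊆ P (n + 1)
  protected_card : ∀ n, (P (n + 1) \ P n).ncard ≤ f (n + 1)
  protected_not_burning : ∀ n, Disjoint (P (n + 1)) (K n)
  spread : ∀ n, K (n + 1) = K n ∪ (G.outerBoundary (K n) \ P (n + 1))

/-- `G` has the `{f(n)}`-containment property if every finite initial fire admits a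
strategy protecting at most `f n` vertices at step `n` under which the set of burning
vertices is eventually constant. -/
def HasContainment {V : Type*} (G : SimpleGraph V) (f : ℕ → ℕ) : Prop :=
  ∀ K₀ : Set V, K₀.Finite →
    ∃ K P : ℕ → Set V, K 0 = K₀ ∧ FireStrategy G f K P ∧ ∃ N, ∀ n, N ≤ n → K n = K N

/-- The Cayley graph of a group w.r.t. a finite (symmetric) set `S`. -/
def cayleyGraph {Γ : Type*} [Group Γ] (S : Finset Γ) : SimpleGraph Γ :=
  SimpleGraph.fromRel (fun g h => g⁻¹ * h ∈ S)

/-- The growth function of a group w.r.t. a finite generating set: the number of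
elements expressible as a product of at most `n` generators, i.e. `|B_n(id)|` in the
word metric. -/
noncomputable def growth {Γ : Type*} [Group Γ] (S : Finset Γ) (n : ℕ) : ℕ :=
  Set.ncard {g : Γ | ∃ l : List Γ, l.length ≤ n ∧ (∀ x ∈ l, x ∈ (S : Set Γ)) ∧ l.prod = g}

set_option maxHeartbeats 1000000

private lemma ff_bdd (h : ℕ → ℝ) (H : ∀ᶠ n in atTop, h n ≤ 0) :
    ∃ A : ℝ, 0 ≤ A ∧ ∀ n, h n ≤ A := by
  obtain ⟨n1, hn1⟩ := eventually_atTop.1 H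
  refine ⟨∑ i ∈ Finset.range n1, |h i|, Finset.sum_nonneg fun i _ => abs_nonneg _, fun n => ?_⟩
  rcases lt_or_ge n n1 with h' | h'
  · exact (le_abs_self _).trans
      (Finset.single_le_sum (fun i _ => abs_nonneg (h i)) (Finset.mem_range.2 h'))
  · exact (hn1 n h').trans (Finset.sum_nonneg fun i _ => abs_nonneg _)

private lemma ff_exp_le {d : ℝ} (h0 : 0 ≤ d) (h2 : d ≤ 1/2) : exp d ≤ 1 + 2 * d := by
  have h1 : 1 - d ≤ exp (-d) := by linarith [Real.add_one_le_exp (-d)]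
  rw [Real.exp_neg] at h1
  have h3 : (1 - d) * exp d ≤ 1 := by
    have := mul_le_mul_of_nonneg_right h1 (Real.exp_pos d).le
    rwa [inv_mul_cancel₀ (Real.exp_pos d).ne'] at this
  nlinarith [mul_nonneg h0 (by linarith : (0:ℝ) ≤ 1 - 2 * d), Real.exp_pos d]

private lemma ff_rpow_step {γ s h : ℝ} (hγ0 : 0 < γ) (hγ1 : γ ≤ 1) (hs : 1 ≤ s)
    (hh0 : 0 ≤ h) (hh1 : h ≤ 1) : (s + h) ^ γ ≤ s ^ γ + γ * h * s ^ (γ - 1) := by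
  have hs0 : (0:ℝ) < s := by linarith
  set t := h / s with htdef
  have ht0 : 0 ≤ t := by positivity
  have bern : (1 + t) ^ γ ≤ 1 + γ * t :=
    rpow_one_add_le_one_add_mul_self (by linarith) hγ0.le hγ1
  have hseq : s + h = s * (1 + t) := by rw [htdef]; field_simp
  have hsγ1 : s ^ (γ - 1) * s = s ^ γ := by
    nth_rewrite 2 [← Real.rpow_one s]
    rw [← Real.rpow_add hs0]
    norm_num
  have h1 : (s + h) ^ γ ≤ s ^ γ * (1 + γ * t) := by
    rw [hseq, mul_rpow hs0.le (by linarith)]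
    exact mul_le_mul_of_nonneg_left bern (rpow_nonneg hs0.le _)
  have h2 : s ^ γ * (1 + γ * t) = s ^ γ + γ * h * s ^ (γ - 1) := by
    rw [htdef]
    field_simp
    linear_combination (-γ) * h * hsγ1
  linarith

private lemma ff_rpow_cmp {γ s h : ℝ} (hγ0 : 0 < γ) (hγ1 : γ ≤ 1) (hs : 1 ≤ s)
    (hh0 : 0 ≤ h) (hh1 : h ≤ 1) : s ^ (γ - 1) ≤ 2 * (s + h) ^ (γ - 1) := by
  have hs0 : (0:ℝ) < s := by linarith
  have hsh0 : (0:ℝ) < s + h := by linarith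
  have j1 : s + h ≤ 2 * s := by linarith
  have j2 : (s + h) ^ (1 - γ) ≤ 2 * s ^ (1 - γ) := by
    calc (s + h) ^ (1 - γ) ≤ (2 * s) ^ (1 - γ) := rpow_le_rpow hsh0.le j1 (by linarith)
      _ = 2 ^ (1 - γ) * s ^ (1 - γ) := mul_rpow (by norm_num) hs0.le
      _ ≤ 2 * s ^ (1 - γ) := by
          have h2 : (2:ℝ) ^ (1 - γ) ≤ 2 ^ (1:ℝ) :=
            rpow_le_rpow_of_exponent_le one_le_two (by linarith)
          rw [rpow_one] at h2
          exact mul_le_mul_of_nonneg_right h2 (rpow_nonneg hs0.le _)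
  have k1 : s ^ (γ - 1) = (s ^ (1 - γ))⁻¹ := by rw [← Real.rpow_neg hs0.le]; ring_nf
  have k2 : (s + h) ^ (γ - 1) = ((s + h) ^ (1 - γ))⁻¹ := by
    rw [← Real.rpow_neg hsh0.le]; ring_nf
  have hy0 : 0 < s ^ (1 - γ) := rpow_pos_of_pos hs0 _
  have hy1 : 0 < (s + h) ^ (1 - γ) := rpow_pos_of_pos hsh0 _
  rw [k1, k2, inv_le_iff_one_le_mul₀ hy0]
  rw [show 2 * ((s + h) ^ (1 - γ))⁻¹ * s ^ (1 - γ)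
      = (2 * s ^ (1 - γ)) * ((s + h) ^ (1 - γ))⁻¹ by ring]
  calc (1:ℝ) = (s + h) ^ (1 - γ) * ((s + h) ^ (1 - γ))⁻¹ := (mul_inv_cancel₀ hy1.ne').symm
    _ ≤ (2 * s ^ (1 - γ)) * ((s + h) ^ (1 - γ))⁻¹ :=
        mul_le_mul_of_nonneg_right j2 (by positivity)

private lemma ff_analytic (c α β D : ℝ) (hc : 0 < c) (hα0 : 0 < α) (hα1 : α ≤ 1)
    (hβ0 : 0 < β) (hβγ : β < α / (α + 1)) (hD : 1 ≤ D) :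
    ∃ a b : ℝ, 1 ≤ a ∧ 0 < b ∧ b ≤ 1 ∧
      ∀ n : ℕ,
        (1 ≤ (a + b * n) ^ (α / (α + 1))) ∧
        ((a + b * n) ^ (α / (α + 1)) ≤ (a + b * ((n : ℝ) + 1)) ^ (α / (α + 1))) ∧
        (exp ((a + b * ((n : ℝ) + 1)) ^ (α / (α + 1))) + D * ((n : ℝ) + 1) * exp (((n : ℝ) + 1) ^ β)
          ≤ exp ((a + b * n) ^ (α / (α + 1)))
            + c * exp ((a + b * n) ^ (α / (α + 1)))
              / (2 * (a + b * ((n : ℝ) + 1)) ^ (α / (α + 1))) ^ (1 / α)) ∧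
        (D * ((n : ℝ) + 1) * exp (((n : ℝ) + 1) ^ β)
          < c * exp ((a + b * n) ^ (α / (α + 1)))
              / (2 * (a + b * ((n : ℝ) + 1)) ^ (α / (α + 1))) ^ (1 / α)) ∧
        (D * ((n : ℝ) + 1) * exp (((n : ℝ) + 1) ^ β)
          < c * (α / 2) ^ (1 / α) * exp ((a + b * ((n : ℝ) + 1)) ^ (α / (α + 1)))) ∧
        (D * ((n : ℝ) + 1) * exp (((n : ℝ) + 1) ^ β)
          ≤ exp ((a + b * ((n : ℝ) + 1)) ^ (α / (α + 1)))) := by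
  set γ := α / (α + 1) with hγdef
  have hα1' : (0:ℝ) < α + 1 := by linarith
  have hγ0 : 0 < γ := div_pos hα0 hα1'
  have hγ1 : γ < 1 := (div_lt_one hα1').2 (by linarith)
  have hγα : γ * (1 / α) = 1 - γ := by rw [hγdef]; field_simp; ring
  have hβ1 : β < 1 := lt_trans hβγ hγ1
  set c₁ := c / (2:ℝ) ^ (1 / α) with hc₁def
  have hc₁ : 0 < c₁ := div_pos hc (rpow_pos_of_pos two_pos _)
  set c₂ := c * (α / 2) ^ (1 / α) with hc₂def
  have hc₂ : 0 < c₂ := mul_pos hc (rpow_pos_of_pos (by positivity) _)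
  set ε := min 1 (min (c₁ / 2) (c₂ / 2)) with hεdef
  have hε0 : 0 < ε := lt_min one_pos (lt_min (by positivity) (by positivity))
  have hε1 : ε ≤ 1 := min_le_left _ _
  have hεc₁ : ε ≤ c₁ / 2 := le_trans (min_le_right _ _) (min_le_left _ _)
  have hεc₂ : ε ≤ c₂ / 2 := le_trans (min_le_right _ _) (min_le_right _ _)
  set b := min (1/2 : ℝ) (c₁ / 8) with hbdef
  have hb0 : 0 < b := lt_min (by norm_num) (by positivity)
  have hb2 : b ≤ 1/2 := min_le_left _ _
  have hb8 : b ≤ c₁ / 8 := min_le_right _ _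
  have hb1 : b ≤ 1 := hb2.trans (by norm_num)
  have hbγ : 0 < b ^ γ := rpow_pos_of_pos hb0 _
  clear_value b ε c₁ c₂
  clear hbdef hεdef
  -- eventual bound for the error function
  have Hev : ∀ᶠ n : ℕ in atTop,
      2 * Real.log ((n : ℝ) + 2) + ((n : ℝ) + 1) ^ β - (b * n) ^ γ / 2 ≤ 0 := by
    have t1 : Tendsto (fun n : ℕ => ((n : ℝ)) ^ (γ - β)) atTop atTop :=
      (tendsto_rpow_atTop (by linarith)).comp tendsto_natCast_atTop_atTop
    have t2 : Tendsto (fun n : ℕ => ((n : ℝ)) ^ β) atTop atTop :=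
      (tendsto_rpow_atTop hβ0).comp tendsto_natCast_atTop_atTop
    filter_upwards [eventually_ge_atTop 1, t1.eventually_ge_atTop ((4 / b ^ γ) * (2 + 2 / β)),
      t2.eventually_ge_atTop (Real.log 3)] with n hn1 hnE hn3
    have hx1 : (1:ℝ) ≤ (n : ℝ) := by exact_mod_cast hn1
    set x := (n : ℝ) with hxdef
    have hx0 : (0:ℝ) < x := by linarith
    have hxβ0 : (0:ℝ) ≤ x ^ β := rpow_nonneg hx0.le _
    have hlog : Real.log (x + 2) ≤ Real.log 3 + x ^ β / β := by
      have h1 : Real.log (x + 2) ≤ Real.log (3 * x) :=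
        Real.log_le_log (by linarith) (by linarith)
      rw [Real.log_mul (by norm_num) hx0.ne'] at h1
      have h2 : Real.log x ≤ x ^ β / β := Real.log_le_rpow_div hx0.le hβ0
      linarith
    have hpow : (x + 1) ^ β ≤ 2 * x ^ β := by
      have h1 : (x + 1) ^ β ≤ (2 * x) ^ β :=
        rpow_le_rpow (by linarith) (by linarith) hβ0.le
      have h2 : (2 * x) ^ β = 2 ^ β * x ^ β := mul_rpow (by norm_num) hx0.le
      have h3 : (2:ℝ) ^ β ≤ 2 ^ (1:ℝ) := rpow_le_rpow_of_exponent_le one_le_two hβ1.le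
      rw [rpow_one] at h3
      calc (x + 1) ^ β ≤ 2 ^ β * x ^ β := by rw [← h2]; exact h1
        _ ≤ 2 * x ^ β := mul_le_mul_of_nonneg_right h3 hxβ0
    have hsplit : (b * x) ^ γ = b ^ γ * (x ^ β * x ^ (γ - β)) := by
      rw [mul_rpow hb0.le hx0.le, ← Real.rpow_add hx0]
      ring_nf
    have h3 : b ^ γ * (x ^ β * ((4 / b ^ γ) * (2 + 2 / β))) ≤ b ^ γ * (x ^ β * x ^ (γ - β)) :=
      mul_le_mul_of_nonneg_left (mul_le_mul_of_nonneg_left hnE hxβ0) hbγ.le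
    have h4 : b ^ γ * (x ^ β * ((4 / b ^ γ) * (2 + 2 / β))) = 4 * (2 + 2/β) * x ^ β := by
      field_simp
    have h5 : (0:ℝ) ≤ (2 / β) * x ^ β := by positivity
    have h6 : Real.log 3 ≤ x ^ β := hn3
    have h7 : x ^ β / β = (1/β) * x ^ β := by ring
    have h8 : (4 * (2 + 2/β)) * x ^ β = 8 * x ^ β + 4 * ((2/β) * x ^ β) := by ring
    have h9 : 2 / β * x ^ β = 2 * (x ^ β / β) := by ring
    linarith [hlog, hpow, h3, h4, h6, hxβ0, h5, h8, h9, hsplit]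
  obtain ⟨A, hA0, hA⟩ := ff_bdd _ Hev
  -- choose a
  set M := max 0 (4 * (A + Real.log D - Real.log ε)) with hMdef
  obtain ⟨a, ⟨ha1, ha2⟩, ha3⟩ :
      ∃ a : ℝ, ((1:ℝ) ≤ a ∧ 8 / γ ≤ a ^ (γ / 2)) ∧ M ≤ a ^ γ := by
    have t1 : Tendsto (fun x : ℝ => x ^ (γ / 2)) atTop atTop := tendsto_rpow_atTop (by positivity)
    have t2 : Tendsto (fun x : ℝ => x ^ γ) atTop atTop := tendsto_rpow_atTop hγ0
    exact (((eventually_ge_atTop 1).and (t1.eventually_ge_atTop _)).and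
      (t2.eventually_ge_atTop _)).exists
  have ha0 : (0:ℝ) < a := by linarith
  have hloga : Real.log a ≤ a ^ γ / 4 := by
    have e1 : Real.log a ≤ a ^ (γ / 2) / (γ / 2) := Real.log_le_rpow_div ha0.le (by positivity)
    have e2 : a ^ (γ / 2) * a ^ (γ / 2) = a ^ γ := by
      rw [← Real.rpow_add ha0]; ring_nf
    have e0 : (0:ℝ) < a ^ (γ/2) := rpow_pos_of_pos ha0 _
    have ha2' : 8 ≤ a ^ (γ / 2) * γ := (div_le_iff₀ hγ0).mp ha2
    have e3 : a ^ (γ / 2) / (γ / 2) ≤ a ^ γ / 4 := by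
      rw [div_le_div_iff₀ (by positivity) (by norm_num)]
      nlinarith [mul_le_mul_of_nonneg_right ha2' e0.le]
    linarith
  refine ⟨a, b, ha1, hb0, hb1, fun n => ?_⟩
  have hx0 : (0:ℝ) ≤ (n : ℝ) := Nat.cast_nonneg n
  set x := (n : ℝ) with hxdef
  set s' := a + b * x with hs'def
  set s := a + b * (x + 1) with hsdef
  have hbx0 : 0 ≤ b * x := mul_nonneg hb0.le hx0
  have hbx1 : 0 ≤ b * (x + 1) := mul_nonneg hb0.le (by linarith)
  have hs'1 : (1:ℝ) ≤ s' := by rw [hs'def]; linarith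
  have hss' : s = s' + b := by rw [hsdef, hs'def]; ring
  have hs1 : (1:ℝ) ≤ s := by linarith
  have hs'0 : (0:ℝ) < s' := by linarith
  have hs0 : (0:ℝ) < s := by linarith
  have hs's : s' ≤ s := by linarith
  have hu1 : (1:ℝ) ≤ s' ^ γ := one_le_rpow hs'1 hγ0.le
  have humono : s' ^ γ ≤ s ^ γ := rpow_le_rpow hs'0.le hs's hγ0.le
  set g : ℝ := exp (s' ^ γ) with hgdef
  set g' : ℝ := exp (s ^ γ) with hg'def
  have hg0 : 0 < g := exp_pos _
  have hg'0 : 0 < g' := exp_pos _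
  have hgg' : g ≤ g' := exp_le_exp.2 humono
  have hX0 : 0 < s ^ (γ - 1) := rpow_pos_of_pos hs0 _
  have hX1 : s ^ (γ - 1) ≤ 1 := rpow_le_one_of_one_le_of_nonpos hs1 (by linarith)
  -- key (B): protected bound
  have hB : D * (x + 1) * exp ((x + 1) ^ β) ≤ ε * s ^ (γ - 1) * g := by
    have hXinv : s ^ (γ - 1) = (s ^ (1 - γ))⁻¹ := by
      rw [← Real.rpow_neg hs0.le]; ring_nf
    have hY0 : (0:ℝ) < s ^ (1 - γ) := rpow_pos_of_pos hs0 _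
    rw [hXinv, show ε * (s ^ (1 - γ))⁻¹ * g = ε * g / s ^ (1 - γ) by ring, le_div_iff₀ hY0]
    have b1 : s ^ (1 - γ) ≤ s := by
      have := rpow_le_rpow_of_exponent_le hs1 (show 1 - γ ≤ 1 by linarith)
      rwa [rpow_one] at this
    have b2 : s ≤ a * (x + 2) := by
      have w1 : b * (x + 1) ≤ 1 * (x + 1) := mul_le_mul_of_nonneg_right hb1 (by linarith)
      have w2 : 1 * (x + 1) ≤ a * (x + 1) := mul_le_mul_of_nonneg_right ha1 (by linarith)
      have : a * (x + 2) = a * (x + 1) + a := by ring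
      rw [hsdef]; linarith
    have hD0 : (0:ℝ) < D := by linarith
    have step1 : D * (x + 1) * exp ((x + 1) ^ β) * s ^ (1 - γ)
        ≤ D * a * ((x + 2) * (x + 2)) * exp ((x + 1) ^ β) := by
      calc D * (x + 1) * exp ((x + 1) ^ β) * s ^ (1 - γ)
          ≤ D * (x + 1) * exp ((x + 1) ^ β) * (a * (x + 2)) :=
            mul_le_mul_of_nonneg_left (b1.trans b2)
              (mul_nonneg (mul_nonneg hD0.le (by linarith)) (exp_pos _).le)
        _ = D * a * ((x + 1) * (x + 2)) * exp ((x + 1) ^ β) := by ring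
        _ ≤ D * a * ((x + 2) * (x + 2)) * exp ((x + 1) ^ β) := by
            have hq : (x + 1) * (x + 2) ≤ (x + 2) * (x + 2) := by
              have : (x + 2) * (x + 2) - (x + 1) * (x + 2) = x + 2 := by ring
              linarith
            exact mul_le_mul_of_nonneg_right
              (mul_le_mul_of_nonneg_left hq (mul_nonneg hD0.le ha0.le)) (exp_pos _).le
    have step2 : D * a * ((x + 2) * (x + 2)) * exp ((x + 1) ^ β)
        = exp (Real.log D + Real.log a + (2 * Real.log (x + 2) + (x + 1) ^ β)) := by
      have : Real.log D + Real.log a + (2 * Real.log (x + 2) + (x + 1) ^ β)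
          = Real.log D + (Real.log a + (Real.log (x + 2) + (Real.log (x + 2) + (x + 1) ^ β))) := by
        ring
      rw [this, Real.exp_add, Real.exp_add, Real.exp_add, Real.exp_add,
        Real.exp_log hD0, Real.exp_log ha0, Real.exp_log (by linarith : (0:ℝ) < x + 2)]
      ring
    have b6 : a ^ γ / 2 + (b * x) ^ γ / 2 ≤ s' ^ γ := by
      have i1 : a ^ γ ≤ s' ^ γ := rpow_le_rpow ha0.le (by rw [hs'def]; linarith) hγ0.le
      have i2 : (b * x) ^ γ ≤ s' ^ γ := rpow_le_rpow hbx0 (by rw [hs'def]; linarith) hγ0.le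
      linarith
    have bM : A + Real.log D - Real.log ε ≤ a ^ γ / 4 := by
      have h := le_trans (le_max_right 0 (4 * (A + Real.log D - Real.log ε))) ha3
      linarith
    have step3 : Real.log D + Real.log a + (2 * Real.log (x + 2) + (x + 1) ^ β)
        ≤ Real.log ε + s' ^ γ := by
      have hh := hA n
      rw [← hxdef] at hh
      linarith
    calc D * (x + 1) * exp ((x + 1) ^ β) * s ^ (1 - γ)
        ≤ exp (Real.log D + Real.log a + (2 * Real.log (x + 2) + (x + 1) ^ β)) := by
          rw [← step2]; exact step1
      _ ≤ exp (Real.log ε + s' ^ γ) := exp_le_exp.2 step3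
      _ = ε * g := by rw [Real.exp_add, Real.exp_log hε0]
  -- key (A): growth of g
  have hAgrow : g' ≤ g + (c₁ / 2) * s ^ (γ - 1) * g := by
    have hstep := ff_rpow_step hγ0 hγ1.le hs'1 hb0.le hb1
    have hX'0 : 0 < s' ^ (γ - 1) := rpow_pos_of_pos hs'0 _
    have hX'1 : s' ^ (γ - 1) ≤ 1 := rpow_le_one_of_one_le_of_nonpos hs'1 (by linarith)
    set d := γ * b * s' ^ (γ - 1) with hddef
    have hd0 : 0 ≤ d := by positivity
    have hdhalf : d ≤ 1 / 2 := by
      have : d ≤ 1 * b * 1 := by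
        apply mul_le_mul (mul_le_mul hγ1.le le_rfl hb0.le (by norm_num)) hX'1 hX'0.le
        linarith
      linarith
    have hexpd : exp d ≤ 1 + 2 * d := ff_exp_le hd0 hdhalf
    have hg'bound : g' ≤ g * (1 + 2 * d) := by
      calc g' = exp (s ^ γ) := rfl
        _ ≤ exp (s' ^ γ + d) := by
            apply exp_le_exp.2
            rw [hss']
            exact hstep
        _ = g * exp d := by rw [Real.exp_add]
        _ ≤ g * (1 + 2 * d) := mul_le_mul_of_nonneg_left hexpd hg0.le
    have hcmp : s' ^ (γ - 1) ≤ 2 * s ^ (γ - 1) := by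
      have := ff_rpow_cmp hγ0 hγ1.le hs'1 hb0.le hb1
      rwa [← hss'] at this
    have hfinal : 2 * d ≤ (c₁ / 2) * s ^ (γ - 1) := by
      have w1 : d ≤ b * (2 * s ^ (γ - 1)) := by
        calc d = γ * b * s' ^ (γ - 1) := rfl
          _ ≤ 1 * b * s' ^ (γ - 1) :=
              mul_le_mul_of_nonneg_right
                (mul_le_mul_of_nonneg_right hγ1.le hb0.le) hX'0.le
          _ = b * s' ^ (γ - 1) := by ring
          _ ≤ b * (2 * s ^ (γ - 1)) := mul_le_mul_of_nonneg_left hcmp hb0.le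
      have w2 : b * (2 * s ^ (γ - 1)) ≤ (c₁ / 8) * (2 * s ^ (γ - 1)) :=
        mul_le_mul_of_nonneg_right hb8 (by positivity)
      have w3 : 2 * ((c₁ / 8) * (2 * s ^ (γ - 1))) ≤ (c₁ / 2) * s ^ (γ - 1) :=
        le_of_eq (by ring)
      linarith
    linarith [hg'bound, mul_le_mul_of_nonneg_left hfinal hg0.le,
      mul_pos hg0 (mul_pos hX0 hg0)]
  -- the division identity
  have hYeq : c * g / (2 * s ^ γ) ^ (1 / α) = c₁ * s ^ (γ - 1) * g := by
    have e1 : (2 * s ^ γ) ^ (1 / α) = 2 ^ (1 / α) * s ^ (1 - γ) := by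
      rw [mul_rpow (by norm_num) (rpow_nonneg hs0.le _), ← Real.rpow_mul hs0.le, hγα]
    have e2 : s ^ (γ - 1) = (s ^ (1 - γ))⁻¹ := by
      rw [← Real.rpow_neg hs0.le]; ring_nf
    rw [e1, e2, hc₁def]
    have h2 : ((2:ℝ) ^ (1 / α)) ≠ 0 := (rpow_pos_of_pos two_pos _).ne'
    have h3 : (s ^ (1 - γ)) ≠ 0 := (rpow_pos_of_pos hs0 _).ne'
    field_simp
  have hcε : ε * s ^ (γ - 1) * g < c₁ * s ^ (γ - 1) * g := by
    have h : ε < c₁ := lt_of_le_of_lt hεc₁ (by linarith)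
    have h2 := mul_lt_mul_of_pos_right h (mul_pos hX0 hg0)
    calc ε * s ^ (γ - 1) * g = ε * (s ^ (γ - 1) * g) := by ring
      _ < c₁ * (s ^ (γ - 1) * g) := h2
      _ = c₁ * s ^ (γ - 1) * g := by ring
  refine ⟨hu1, humono, ?_, ?_, ?_, ?_⟩
  · rw [hYeq]
    have h1 : ε * s ^ (γ - 1) * g ≤ (c₁ / 2) * s ^ (γ - 1) * g := by
      have h2 := mul_le_mul_of_nonneg_right hεc₁ (mul_pos hX0 hg0).le
      calc ε * s ^ (γ - 1) * g = ε * (s ^ (γ - 1) * g) := by ring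
        _ ≤ c₁ / 2 * (s ^ (γ - 1) * g) := h2
        _ = (c₁ / 2) * s ^ (γ - 1) * g := by ring
    have hxx : D * (x + 1) * exp ((x + 1) ^ β) ≤ (c₁ / 2) * s ^ (γ - 1) * g := hB.trans h1
    have heq : c₁ * s ^ (γ - 1) * g
        = (c₁/2) * s ^ (γ - 1) * g + (c₁/2) * s ^ (γ - 1) * g := by ring
    linarith
  · rw [hYeq]
    exact lt_of_le_of_lt hB hcε
  · have h1 : ε * s ^ (γ - 1) * g ≤ ε * g' := by
      have q1 : ε * (s ^ (γ - 1) * g) ≤ ε * (1 * g) :=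
        mul_le_mul_of_nonneg_left (mul_le_mul_of_nonneg_right hX1 hg0.le) hε0.le
      have q2 : ε * g ≤ ε * g' := mul_le_mul_of_nonneg_left hgg' hε0.le
      calc ε * s ^ (γ - 1) * g = ε * (s ^ (γ - 1) * g) := by ring
        _ ≤ ε * (1 * g) := q1
        _ = ε * g := by ring
        _ ≤ ε * g' := q2
    have h2 : ε * g' < c₂ * g' :=
      mul_lt_mul_of_pos_right (lt_of_le_of_lt hεc₂ (by linarith)) hg'0
    calc D * (x + 1) * exp ((x + 1) ^ β) ≤ ε * g' := hB.trans h1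
      _ < c₂ * g' := h2
  · have h1 : ε * s ^ (γ - 1) * g ≤ g' := by
      have q1 : ε * (s ^ (γ - 1) * g) ≤ 1 * (s ^ (γ - 1) * g) :=
        mul_le_mul_of_nonneg_right hε1 (mul_pos hX0 hg0).le
      have q2 : s ^ (γ - 1) * g ≤ 1 * g := mul_le_mul_of_nonneg_right hX1 hg0.le
      calc ε * s ^ (γ - 1) * g = ε * (s ^ (γ - 1) * g) := by ring
        _ ≤ 1 * (s ^ (γ - 1) * g) := q1
        _ = s ^ (γ - 1) * g := by ring
        _ ≤ 1 * g := q2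
        _ = g := by ring
        _ ≤ g' := hgg'
    exact hB.trans h1

private lemma ff_boundary_finite {V : Type*} (G : SimpleGraph V) (hlf : G.LocallyFinite)
    {K : Set V} (hK : K.Finite) : (G.outerBoundary K).Finite := by
  have hsub : G.outerBoundary K ⊆ ⋃ u ∈ K, G.neighborSet u := by
    rintro v ⟨-, u, hu, huv⟩
    exact Set.mem_biUnion hu huv
  exact (hK.biUnion fun u _ => by haveI := hlf u; exact (G.neighborSet u).toFinite).subset hsub

private lemma ff_iso_le {V : Type*} (G : SimpleGraph V) {K : Set V} (hK : K.Finite) :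
    G.isoProfile K.ncard ≤ (G.outerBoundary K).ncard :=
  Nat.sInf_le ⟨K, hK, rfl, rfl⟩

/-- Let `G` be a connected locally finite graph whose isoperimetric profile satisfies
`Φ(k) ≥ c * k / (log k)^(1/α)` for all `k ≥ 2`, where `c > 0` and `0 < α ≤ 1`.
Fix `0 < β < α/(α+1)` and `f(n) = o(e^{n^β})`. Then `G` does not satisfy
`{f(n)}`-containment; moreover there is `C > 0` such that no initial fire of size at
least `C` can be contained. -/
theorem firefighter_isoperimetric_stretched {V : Type*} (G : SimpleGraph V)
    (hconn : G.Connected) (hlf : G.LocallyFinite)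
    (c : ℝ) (hc : 0 < c) (α : ℝ) (hα0 : 0 < α) (hα1 : α ≤ 1)
    (hiso : ∀ k : ℕ, 2 ≤ k →
      c * (k : ℝ) / (Real.log (k : ℝ)) ^ (1 / α) ≤ (G.isoProfile k : ℝ))
    (β : ℝ) (hβ0 : 0 < β) (hβ : β < α / (α + 1))
    (f : ℕ → ℕ)
    (hf : (fun n => (f n : ℝ)) =o[atTop] fun n => Real.exp ((n : ℝ) ^ β)) :
    ¬ HasContainment G f ∧
      ∃ C : ℕ, 0 < C ∧ ∀ K P : ℕ → Set V, FireStrategy G f K P → C ≤ (K 0).ncard →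
        ¬ ∃ N : ℕ, ∀ n : ℕ, N ≤ n → K n = K N := by
  -- V is infinite
  have hVinf : Infinite V := by
    by_contra hfin
    rw [not_infinite_iff_finite] at hfin
    have h2 : 2 ≤ Nat.card V + 2 := by omega
    have hempty : {m | ∃ K : Set V, K.Finite ∧ K.ncard = Nat.card V + 2 ∧
        (G.outerBoundary K).ncard = m} = ∅ := by
      ext m
      simp only [Set.mem_setOf_eq, Set.mem_empty_iff_false, iff_false, not_exists]
      rintro K ⟨hK, hKcard, -⟩
      have hle := Set.ncard_le_ncard (Set.subset_univ K) Set.finite_univ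
      rw [Set.ncard_univ] at hle
      omega
    have hzero : G.isoProfile (Nat.card V + 2) = 0 := by
      rw [SimpleGraph.isoProfile, hempty, Nat.sInf_empty]
    have hcontr := hiso (Nat.card V + 2) h2
    rw [hzero] at hcontr
    have hk2 : (2:ℝ) ≤ ((Nat.card V + 2 : ℕ) : ℝ) := by
      push_cast
      have : (0:ℝ) ≤ (Nat.card V : ℝ) := Nat.cast_nonneg _
      linarith
    have hlogpos : 0 < Real.log ((Nat.card V + 2 : ℕ) : ℝ) := Real.log_pos (by linarith)
    have hpos : 0 < c * ((Nat.card V + 2 : ℕ) : ℝ)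
        / (Real.log ((Nat.card V + 2 : ℕ) : ℝ)) ^ (1 / α) :=
      div_pos (mul_pos hc (by linarith)) (Real.rpow_pos_of_pos hlogpos _)
    simp only [Nat.cast_zero] at hcontr
    linarith
  -- extract the little-o bound
  obtain ⟨n0, hn0⟩ := eventually_atTop.1 (hf.def one_pos)
  have hfb : ∀ m : ℕ, (f m : ℝ) ≤ (∑ i ∈ Finset.range n0, (f i : ℝ)) + exp ((m : ℝ) ^ β) := by
    intro m
    rcases lt_or_ge m n0 with h | h
    · have h1 : (f m : ℝ) ≤ ∑ i ∈ Finset.range n0, (f i : ℝ) :=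
        Finset.single_le_sum (f := fun i => (f i : ℝ)) (fun i _ => by positivity)
          (Finset.mem_range.2 h)
      linarith [Real.exp_pos ((m : ℝ) ^ β)]
    · have h1 := hn0 m h
      rw [Real.norm_eq_abs, Real.norm_eq_abs, abs_of_nonneg (by positivity : (0:ℝ) ≤ (f m : ℝ)),
        abs_of_nonneg (Real.exp_pos _).le, one_mul] at h1
      have h2 : (0:ℝ) ≤ ∑ i ∈ Finset.range n0, (f i : ℝ) := by positivity
      linarith
  set D := (∑ i ∈ Finset.range n0, (f i : ℝ)) + 1 with hDdef
  have hD1 : 1 ≤ D := by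
    have h2 : (0:ℝ) ≤ ∑ i ∈ Finset.range n0, (f i : ℝ) := by positivity
    rw [hDdef]; linarith
  obtain ⟨a, b, ha1, hb0, hb1, hkey⟩ := ff_analytic c α β D hc hα0 hα1 hβ0 hβ hD1
  set C := ⌈Real.exp (a ^ (α / (α + 1)))⌉₊ with hCdef
  have hC0 : 0 < C := Nat.ceil_pos.2 (Real.exp_pos _)
  clear_value D C
  -- the main quantitative claim
  have main : ∀ K P : ℕ → Set V, FireStrategy G f K P → C ≤ (K 0).ncard →
      ¬ ∃ N : ℕ, ∀ n : ℕ, N ≤ n → K n = K N := by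
    intro K P hst hC hcont
    obtain ⟨N, hN⟩ := hcont
    have hKfin := hst.burning_finite
    have hPfin := hst.protected_finite
    have hbfin : ∀ n, (G.outerBoundary (K n)).Finite := fun n =>
      ff_boundary_finite G hlf (hKfin n)
    -- protected cardinality bound (ℕ)
    have hPsum : ∀ n, (P n).ncard ≤ ∑ i ∈ Finset.range n, f (i + 1) := by
      intro n
      induction n with
      | zero => simp [hst.protected_zero]
      | succ n ih =>
        have hPdecomp : P n ∪ (P (n + 1) \ P n) = P (n + 1) :=
          Set.union_diff_cancel (hst.protected_mono n)
        have hle := Set.ncard_union_le (P n) (P (n + 1) \ P n)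
        rw [hPdecomp] at hle
        calc (P (n + 1)).ncard ≤ (P n).ncard + (P (n + 1) \ P n).ncard := hle
          _ ≤ (∑ i ∈ Finset.range n, f (i + 1)) + f (n + 1) :=
              add_le_add ih (hst.protected_card n)
          _ = ∑ i ∈ Finset.range (n + 1), f (i + 1) := (Finset.sum_range_succ _ n).symm
    -- protected cardinality bound (ℝ)
    have hPreal : ∀ n : ℕ, ((P (n + 1)).ncard : ℝ)
        ≤ D * ((n : ℝ) + 1) * exp (((n : ℝ) + 1) ^ β) := by
      intro n
      have h1 : ((P (n + 1)).ncard : ℝ) ≤ ∑ i ∈ Finset.range (n + 1), (f (i + 1) : ℝ) := by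
        exact_mod_cast hPsum (n + 1)
      have hE1 : (1:ℝ) ≤ exp (((n : ℝ) + 1) ^ β) := Real.one_le_exp (by positivity)
      have h2 : ∀ i ∈ Finset.range (n + 1),
          (f (i + 1) : ℝ) ≤ (D - 1) + exp (((n : ℝ) + 1) ^ β) := by
        intro i hi
        have hi' : (i : ℝ) + 1 ≤ (n : ℝ) + 1 := by
          have : i < n + 1 := Finset.mem_range.1 hi
          have : (i : ℝ) ≤ (n : ℝ) := by exact_mod_cast Nat.lt_succ_iff.1 this
          linarith
        have h3 := hfb (i + 1)
        have h4 : exp (((i + 1 : ℕ) : ℝ) ^ β) ≤ exp (((n : ℝ) + 1) ^ β) := by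
          apply Real.exp_le_exp.2
          apply Real.rpow_le_rpow (by positivity) _ hβ0.le
          push_cast
          linarith
        rw [hDdef]
        push_cast at h3 h4 ⊢
        linarith
      have h5 : ∑ i ∈ Finset.range (n + 1), (f (i + 1) : ℝ)
          ≤ ((n : ℝ) + 1) * ((D - 1) + exp (((n : ℝ) + 1) ^ β)) := by
        have := Finset.sum_le_card_nsmul (Finset.range (n + 1)) (fun i => (f (i + 1) : ℝ))
          ((D - 1) + exp (((n : ℝ) + 1) ^ β)) h2
        rw [Finset.card_range, nsmul_eq_mul] at this
        push_cast at this
        linarith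
      have h6 : (D - 1) + exp (((n : ℝ) + 1) ^ β) ≤ D * exp (((n : ℝ) + 1) ^ β) := by
        nlinarith [mul_nonneg (sub_nonneg.2 hD1) (sub_nonneg.2 hE1)]
      have h7 : ((n : ℝ) + 1) * ((D - 1) + exp (((n : ℝ) + 1) ^ β))
          ≤ ((n : ℝ) + 1) * (D * exp (((n : ℝ) + 1) ^ β)) :=
        mul_le_mul_of_nonneg_left h6 (by positivity)
      have h8 : ((n : ℝ) + 1) * (D * exp (((n : ℝ) + 1) ^ β))
          = D * ((n : ℝ) + 1) * exp (((n : ℝ) + 1) ^ β) := by ring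
      linarith
    -- growth inequality
    have hgrow : ∀ n, (K n).ncard + (G.outerBoundary (K n)).ncard
        ≤ (K (n + 1)).ncard + (P (n + 1)).ncard := by
      intro n
      have hdisj : Disjoint (K n) (G.outerBoundary (K n) \ P (n + 1)) := by
        rw [Set.disjoint_left]
        rintro v hv ⟨⟨hnot, -⟩, -⟩
        exact hnot hv
      have hunion : (K (n + 1)).ncard
          = (K n).ncard + (G.outerBoundary (K n) \ P (n + 1)).ncard := by
        rw [hst.spread n]
        exact Set.ncard_union_eq hdisj (hKfin n) ((hbfin n).diff)
      have hsub : G.outerBoundary (K n)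
          ⊆ (G.outerBoundary (K n) \ P (n + 1)) ∪ P (n + 1) := by
        intro v hv
        by_cases hvP : v ∈ P (n + 1)
        · exact Or.inr hvP
        · exact Or.inl ⟨hv, hvP⟩
      have h2 : (G.outerBoundary (K n)).ncard
          ≤ (G.outerBoundary (K n) \ P (n + 1)).ncard + (P (n + 1)).ncard :=
        le_trans (Set.ncard_le_ncard hsub (((hbfin n).diff).union (hPfin _)))
          (Set.ncard_union_le _ _)
      omega
    -- isoperimetric lower bound for the boundary
    have hΦ : ∀ n, 2 ≤ (K n).ncard →
        c * ((K n).ncard : ℝ) / (Real.log ((K n).ncard : ℝ)) ^ (1 / α)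
          ≤ ((G.outerBoundary (K n)).ncard : ℝ) := by
      intro n h2
      refine le_trans (hiso _ h2) ?_
      exact_mod_cast ff_iso_le G (hKfin n)
    -- the fire grows at least like exp ((a+bn)^γ)
    have hgk : ∀ n : ℕ, exp ((a + b * (n : ℝ)) ^ (α / (α + 1))) ≤ ((K n).ncard : ℝ) := by
      intro n
      induction n with
      | zero =>
        have h1 : Real.exp (a ^ (α / (α + 1))) ≤ (C : ℝ) := by
          rw [hCdef]; exact Nat.le_ceil _
        have h2 : (C : ℝ) ≤ ((K 0).ncard : ℝ) := by exact_mod_cast hC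
        simpa using h1.trans h2
      | succ n ih =>
        obtain ⟨hu1, humono, H1, H2, H3, H4⟩ := hkey n
        have he2 : (2:ℝ) ≤ exp ((a + b * (n : ℝ)) ^ (α / (α + 1))) := by
          have h3 := Real.add_one_le_exp (1:ℝ)
          calc (2:ℝ) ≤ exp 1 := by linarith
            _ ≤ exp ((a + b * (n : ℝ)) ^ (α / (α + 1))) := Real.exp_le_exp.2 hu1
        have hk2R : (2:ℝ) ≤ ((K n).ncard : ℝ) := he2.trans ih
        have hk2 : 2 ≤ (K n).ncard := by exact_mod_cast hk2R
        have hΦn := hΦ n hk2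
        have hPn := hPreal n
        have hrecR : ((K n).ncard : ℝ) + ((G.outerBoundary (K n)).ncard : ℝ)
            ≤ ((K (n + 1)).ncard : ℝ) + ((P (n + 1)).ncard : ℝ) := by
          exact_mod_cast hgrow n
        have hgoal : exp ((a + b * ((n : ℝ) + 1)) ^ (α / (α + 1))) ≤ ((K (n + 1)).ncard : ℝ) := by
          rcases le_or_gt ((K n).ncard : ℝ)
              (exp (2 * (a + b * ((n : ℝ) + 1)) ^ (α / (α + 1)))) with hcase | hcase
          · have hl1 : Real.log ((K n).ncard : ℝ)
                ≤ 2 * (a + b * ((n : ℝ) + 1)) ^ (α / (α + 1)) := by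
              have := Real.log_le_log (by linarith : (0:ℝ) < ((K n).ncard : ℝ)) hcase
              rwa [Real.log_exp] at this
            have hl0 : 0 ≤ Real.log ((K n).ncard : ℝ) := Real.log_nonneg (by linarith)
            have hl2 : (Real.log ((K n).ncard : ℝ)) ^ (1 / α)
                ≤ (2 * (a + b * ((n : ℝ) + 1)) ^ (α / (α + 1))) ^ (1 / α) :=
              Real.rpow_le_rpow hl0 hl1 (by positivity)
            have hlpos : 0 < (Real.log ((K n).ncard : ℝ)) ^ (1 / α) :=
              Real.rpow_pos_of_pos (Real.log_pos (by linarith)) _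
            have hdiv : c * exp ((a + b * (n : ℝ)) ^ (α / (α + 1)))
                  / (2 * (a + b * ((n : ℝ) + 1)) ^ (α / (α + 1))) ^ (1 / α)
                ≤ c * ((K n).ncard : ℝ) / (Real.log ((K n).ncard : ℝ)) ^ (1 / α) :=
              div_le_div₀ (by positivity) (mul_le_mul_of_nonneg_left ih hc.le) hlpos hl2
            linarith
          · have hb0' : (0:ℝ) ≤ ((G.outerBoundary (K n)).ncard : ℝ) := Nat.cast_nonneg _
            have h2e : (2:ℝ) ≤ exp ((a + b * ((n : ℝ) + 1)) ^ (α / (α + 1))) := by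
              have h3 := Real.add_one_le_exp (1:ℝ)
              calc (2:ℝ) ≤ exp 1 := by linarith
                _ ≤ _ := Real.exp_le_exp.2 (le_trans hu1 humono)
            have hexp2 : exp ((a + b * ((n : ℝ) + 1)) ^ (α / (α + 1))) * 2
                ≤ exp (2 * (a + b * ((n : ℝ) + 1)) ^ (α / (α + 1))) := by
              rw [two_mul, Real.exp_add]
              exact mul_le_mul_of_nonneg_left h2e (Real.exp_pos _).le
            linarith
        push_cast
        exact hgoal
    -- containment yields a contradiction
    have hKN1 : K (N + 1) = K N := hN (N + 1) (Nat.le_succ N)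
    have hsubP : G.outerBoundary (K N) ⊆ P (N + 1) := by
      intro v hv
      by_contra hvP
      have hvK : v ∈ K (N + 1) := by
        rw [hst.spread N]
        exact Or.inr ⟨hv, hvP⟩
      rw [hKN1] at hvK
      exact hv.1 hvK
    have hbdP : ((G.outerBoundary (K N)).ncard : ℝ) ≤ ((P (N + 1)).ncard : ℝ) := by
      exact_mod_cast Set.ncard_le_ncard hsubP (hPfin (N + 1))
    obtain ⟨hu1, humono, H1, H2, H3, H4⟩ := hkey N
    have ihN := hgk N
    have he2 : (2:ℝ) ≤ exp ((a + b * (N : ℝ)) ^ (α / (α + 1))) := by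
      have h3 := Real.add_one_le_exp (1:ℝ)
      calc (2:ℝ) ≤ exp 1 := by linarith
        _ ≤ _ := Real.exp_le_exp.2 hu1
    have hk2R : (2:ℝ) ≤ ((K N).ncard : ℝ) := he2.trans ihN
    have hk2 : 2 ≤ (K N).ncard := by exact_mod_cast hk2R
    have hΦN := hΦ N hk2
    have hPN := hPreal N
    rcases le_or_gt ((K N).ncard : ℝ)
        (exp (2 * (a + b * ((N : ℝ) + 1)) ^ (α / (α + 1)))) with hcase | hcase
    · have hl1 : Real.log ((K N).ncard : ℝ)
          ≤ 2 * (a + b * ((N : ℝ) + 1)) ^ (α / (α + 1)) := by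
        have := Real.log_le_log (by linarith : (0:ℝ) < ((K N).ncard : ℝ)) hcase
        rwa [Real.log_exp] at this
      have hl0 : 0 ≤ Real.log ((K N).ncard : ℝ) := Real.log_nonneg (by linarith)
      have hl2 : (Real.log ((K N).ncard : ℝ)) ^ (1 / α)
          ≤ (2 * (a + b * ((N : ℝ) + 1)) ^ (α / (α + 1))) ^ (1 / α) :=
        Real.rpow_le_rpow hl0 hl1 (by positivity)
      have hlpos : 0 < (Real.log ((K N).ncard : ℝ)) ^ (1 / α) :=
        Real.rpow_pos_of_pos (Real.log_pos (by linarith)) _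
      have hdiv : c * exp ((a + b * (N : ℝ)) ^ (α / (α + 1)))
            / (2 * (a + b * ((N : ℝ) + 1)) ^ (α / (α + 1))) ^ (1 / α)
          ≤ c * ((K N).ncard : ℝ) / (Real.log ((K N).ncard : ℝ)) ^ (1 / α) :=
        div_le_div₀ (by positivity) (mul_le_mul_of_nonneg_left ihN hc.le) hlpos hl2
      linarith
    · -- huge fire case
      set k : ℝ := ((K N).ncard : ℝ) with hkdef
      have hk0 : (0:ℝ) < k := by rw [hkdef]; linarith
      have hk1 : (1:ℝ) < k := by rw [hkdef]; linarith
      have hs1 : exp ((a + b * ((N : ℝ) + 1)) ^ (α / (α + 1))) ≤ k ^ ((1:ℝ) / 2) := by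
        have h1 : exp (2 * (a + b * ((N : ℝ) + 1)) ^ (α / (α + 1))) ≤ k := hcase.le
        have h2 : (exp (2 * (a + b * ((N : ℝ) + 1)) ^ (α / (α + 1)))) ^ ((1:ℝ) / 2)
            ≤ k ^ ((1:ℝ) / 2) := Real.rpow_le_rpow (Real.exp_pos _).le h1 (by norm_num)
        have h3 : (exp (2 * (a + b * ((N : ℝ) + 1)) ^ (α / (α + 1)))) ^ ((1:ℝ) / 2)
            = exp ((a + b * ((N : ℝ) + 1)) ^ (α / (α + 1))) := by
          rw [← Real.exp_mul]
          congr 1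
          ring
        rwa [h3] at h2
      have hlog2 : (Real.log k) ^ (1 / α) ≤ (2 / α) ^ (1 / α) * k ^ ((1:ℝ) / 2) := by
        have l1 : Real.log k ≤ k ^ (α / 2) / (α / 2) := Real.log_le_rpow_div hk0.le (by positivity)
        have l2 : k ^ (α / 2) / (α / 2) = (2 / α) * k ^ (α / 2) := by
          field_simp
        have l3 : (Real.log k) ^ (1 / α) ≤ ((2 / α) * k ^ (α / 2)) ^ (1 / α) := by
          apply Real.rpow_le_rpow (Real.log_nonneg hk1.le) _ (by positivity)
          rw [← l2]; exact l1
        have l4 : ((2 / α) * k ^ (α / 2)) ^ (1 / α)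
            = (2 / α) ^ (1 / α) * (k ^ (α / 2)) ^ (1 / α) :=
          Real.mul_rpow (by positivity) (by positivity)
        have l5 : (k ^ (α / 2)) ^ (1 / α) = k ^ ((1:ℝ) / 2) := by
          rw [← Real.rpow_mul hk0.le]
          congr 1
          field_simp
        rw [l4, l5] at l3
        exact l3
      have hsqrtpos : 0 < k ^ ((1:ℝ) / 2) := Real.rpow_pos_of_pos hk0 _
      have hlogpos : 0 < (Real.log k) ^ (1 / α) :=
        Real.rpow_pos_of_pos (Real.log_pos hk1) _
      have hkey2 : c * (α / 2) ^ (1 / α) * k ^ ((1:ℝ) / 2)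
          ≤ c * k / (Real.log k) ^ (1 / α) := by
        rw [le_div_iff₀ hlogpos]
        have m1 : c * (α / 2) ^ (1 / α) * k ^ ((1:ℝ) / 2) * (Real.log k) ^ (1 / α)
            ≤ c * (α / 2) ^ (1 / α) * k ^ ((1:ℝ) / 2) * ((2 / α) ^ (1 / α) * k ^ ((1:ℝ) / 2)) :=
          mul_le_mul_of_nonneg_left hlog2 (by positivity)
        have m2 : (α / 2) ^ (1 / α) * (2 / α) ^ (1 / α) = 1 := by
          rw [← Real.mul_rpow (by positivity) (by positivity)]
          rw [show (α / 2) * (2 / α) = 1 by field_simp]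
          exact Real.one_rpow _
        have m3 : k ^ ((1:ℝ) / 2) * k ^ ((1:ℝ) / 2) = k := by
          rw [← Real.rpow_add hk0]
          norm_num
        calc c * (α / 2) ^ (1 / α) * k ^ ((1:ℝ) / 2) * (Real.log k) ^ (1 / α)
            ≤ c * (α / 2) ^ (1 / α) * k ^ ((1:ℝ) / 2) * ((2 / α) ^ (1 / α) * k ^ ((1:ℝ) / 2)) := m1
          _ = c * ((α / 2) ^ (1 / α) * (2 / α) ^ (1 / α)) * (k ^ ((1:ℝ) / 2) * k ^ ((1:ℝ) / 2)) := by
              ring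
          _ = c * k := by rw [m2, m3]; ring
      have hc3 : c * (α / 2) ^ (1 / α) * exp ((a + b * ((N : ℝ) + 1)) ^ (α / (α + 1)))
          ≤ c * (α / 2) ^ (1 / α) * k ^ ((1:ℝ) / 2) :=
        mul_le_mul_of_nonneg_left hs1 (by positivity)
      linarith
  refine ⟨?_, C, hC0, main⟩
  intro hHC
  obtain ⟨K₀, hsub, hfin, hcard⟩ :=
    Set.Infinite.exists_subset_ncard_eq (Set.infinite_univ (α := V)) C
  obtain ⟨K, P, hK0, hstrat, N, hN⟩ := hHC K₀ hfin
  exact main K P hstrat (by rw [hK0, hcard]) ⟨N, hN⟩
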